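/- arXiv:2408.13020 — 3 statements merged into one kernel-verified Lean document; each statement's English description precedes it below -/
import Mathlib

section
/- Let n ≥ 1 and let A be an (n+1)×(n+1) complex matrix with rank A = 1 and Tr A = 0 (i.e. A lies in the minimal nilpotent orbit of sl(n+1,ℂ)). Then A² = 0, so exp(A) = 1 + A, and for every 1 ≤ k ≤ n the coefficient of the basis vector e_1 ∧ ⋯ ∧ e_k in the expansion of (⋀^k(exp A))(e_1 ∧ ⋯ ∧ e_k) in the standard wedge basis of ⋀^k(ℂ^{n+1}) equals 1 + Tr(A_{k×k}). (These matrix coefficients are the Hamiltonians of the integrable system on the minimal nilpotent orbit in type A, and Tr(A_{k×k}) are the linear terms of the Gelfand–Zeitlin system.) -/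
open ExteriorAlgebra

/-- The wedge `e_{i₁} ∧ ⋯ ∧ e_{i_k}` of standard basis vectors of `ℂ^N` indexed by the
increasing enumeration of a `k`-element subset `S` of `Fin N`, viewed in the exterior
algebra of `ℂ^N`.  These wedges form the standard basis of the `k`-th exterior power. -/
noncomputable def wedgeOfSubset {N k : ℕ} (S : {S : Finset (Fin N) // S.card = k}) :
    ExteriorAlgebra ℂ (Fin N → ℂ) :=
  ExteriorAlgebra.ιMulti ℂ k fun j : Fin k => Pi.single ((S.1.orderIsoOfFin S.2 j : Fin N)) (1 : ℂ)

lemma rank_one_decomp {m : ℕ} (A : Matrix (Fin m) (Fin m) ℂ) (h : A.rank = 1) :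
    ∃ u c : Fin m → ℂ, ∀ i j, A i j = u i * c j := by
  have h1 : Module.finrank ℂ (LinearMap.range A.mulVecLin) = 1 := h
  rw [finrank_eq_one_iff'] at h1
  obtain ⟨v, hv0, hv⟩ := h1
  choose f hf using hv
  refine ⟨v.1, fun j => f ⟨A.mulVec (Pi.single j 1), LinearMap.mem_range_self _ _⟩, fun i j => ?_⟩
  have := congrArg (fun w : LinearMap.range A.mulVecLin => (w : Fin m → ℂ) i)
    (hf ⟨A.mulVec (Pi.single j 1), LinearMap.mem_range_self _ _⟩)
  simp only [Submodule.coe_smul, Pi.smul_apply, smul_eq_mul] at this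
  rw [mul_comm]
  rw [this]
  simp [Matrix.mulVec_single]

lemma sq_zero {m : ℕ} (A : Matrix (Fin m) (Fin m) ℂ) (u c : Fin m → ℂ)
    (hA : ∀ i j, A i j = u i * c j) (htr : A.trace = 0) : A * A = 0 := by
  have hs : ∑ l, u l * c l = 0 := by
    rw [← htr, Matrix.trace]
    exact Finset.sum_congr rfl fun l _ => (hA l l).symm
  ext i j
  rw [Matrix.mul_apply]
  have : ∀ l, A i l * A l j = (u i * c j) * (u l * c l) := by
    intro l; rw [hA, hA]; ring
  simp only [this, ← Finset.mul_sum, hs, mul_zero, Matrix.zero_apply]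

lemma exp_eq {m : ℕ} (A : Matrix (Fin m) (Fin m) ℂ) (h2 : A * A = 0) :
    NormedSpace.exp A = 1 + A := by
  have hp : ∀ j : ℕ, A ^ (j + 2) = 0 := by
    intro j
    rw [pow_add, pow_two, h2, mul_zero]
  rw [NormedSpace.exp_eq_tsum (𝕂 := ℂ)]
  show ∑' n : ℕ, ((n.factorial : ℂ))⁻¹ • A ^ n = 1 + A
  rw [tsum_eq_sum (s := {0, 1}) (by
    intro b hb
    simp only [Finset.mem_insert, Finset.mem_singleton] at hb
    push_neg at hb
    obtain ⟨j, rfl⟩ : ∃ j, b = j + 2 := ⟨b - 2, by omega⟩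
    rw [hp j, smul_zero])]
  simp [Nat.factorial]

noncomputable def coeffFn {N k : ℕ} (S₀ : {S : Finset (Fin N) // S.card = k}) :
    ExteriorAlgebra ℂ (Fin N → ℂ) →ₗ[ℂ] ℂ :=
  ExteriorAlgebra.liftAlternating (Function.update 0 k
    ((Matrix.detRowAlternating : (Fin k → ℂ) [⋀^Fin k]→ₗ[ℂ] ℂ).compLinearMap
      (LinearMap.funLeft ℂ ℂ (S₀.1.orderEmbOfFin S₀.2))))

lemma coeffFn_ιMulti {N k : ℕ} (S₀ : {S : Finset (Fin N) // S.card = k})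
    (v : Fin k → (Fin N → ℂ)) :
    coeffFn S₀ (ExteriorAlgebra.ιMulti ℂ k v) =
      Matrix.det (Matrix.of fun i j => v i (S₀.1.orderEmbOfFin S₀.2 j)) := by
  rw [coeffFn, ExteriorAlgebra.liftAlternating_apply_ιMulti, Function.update_self]
  rfl

lemma coeffFn_wedge {N k : ℕ} (S₀ S : {S : Finset (Fin N) // S.card = k}) :
    coeffFn S₀ (wedgeOfSubset S) = if S = S₀ then 1 else 0 := by
  rw [wedgeOfSubset, coeffFn_ιMulti]
  by_cases h : S = S₀
  · subst h
    rw [if_pos rfl]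
    have : (Matrix.of fun i j => (Pi.single (M := fun _ : Fin N => ℂ)
        ((S.1.orderIsoOfFin S.2 i : Fin N)) (1:ℂ)) (S.1.orderEmbOfFin S.2 j)) = 1 := by
      ext i j
      rw [Matrix.of_apply, Pi.single_apply, Matrix.one_apply, Finset.coe_orderIsoOfFin_apply]
      exact if_congr ⟨fun h => ((S.1.orderEmbOfFin S.2).injective h).symm,
        fun h => by rw [h]⟩ rfl rfl
    rw [this, Matrix.det_one]
  · rw [if_neg h]
    have hns : ¬ S.1 ⊆ S₀.1 := fun hsub => h (Subtype.ext
      (Finset.eq_of_subset_of_card_le hsub (by rw [S.2, S₀.2])))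
    obtain ⟨x, hxS, hxS₀⟩ := Finset.not_subset.1 hns
    apply Matrix.det_eq_zero_of_row_eq_zero ((S.1.orderIsoOfFin S.2).symm ⟨x, hxS⟩)
    intro j
    rw [Matrix.of_apply, Finset.coe_orderIsoOfFin_apply]
    have hx : S.1.orderEmbOfFin S.2 ((S.1.orderIsoOfFin S.2).symm ⟨x, hxS⟩) = x := by
      rw [← Finset.coe_orderIsoOfFin_apply, OrderIso.apply_symm_apply]
    rw [hx, Pi.single_apply, if_neg]
    intro heq
    exact hxS₀ (heq ▸ Finset.orderEmbOfFin_mem S₀.1 S₀.2 j)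

lemma wedge_span {N k : ℕ} (v : Fin k → (Fin N → ℂ)) :
    ExteriorAlgebra.ιMulti ℂ k v ∈
      Submodule.span ℂ (Set.range (wedgeOfSubset (N := N) (k := k))) := by
  have hv : v = fun i => ∑ r : Fin N, v i r • (Pi.single r 1 : Fin N → ℂ) := by
    funext i j
    simp [Pi.single_apply, Finset.sum_ite_eq', mul_ite]
  rw [hv]
  rw [show (ExteriorAlgebra.ιMulti ℂ k (fun i => ∑ r : Fin N, v i r • (Pi.single r 1 : Fin N → ℂ))
      : ExteriorAlgebra ℂ (Fin N → ℂ)) =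
      (ExteriorAlgebra.ιMulti ℂ k).toMultilinearMap
        (fun i => ∑ r : Fin N, v i r • (Pi.single r 1 : Fin N → ℂ)) from rfl]
  rw [MultilinearMap.map_sum]
  apply Submodule.sum_mem
  intro f _
  rw [MultilinearMap.map_smul_univ]
  apply Submodule.smul_mem
  show ExteriorAlgebra.ιMulti ℂ k (fun i => (Pi.single (f i) (1:ℂ) : Fin N → ℂ)) ∈ _
  by_cases hinj : Function.Injective f
  · set S : {S : Finset (Fin N) // S.card = k} :=
      ⟨Finset.image f Finset.univ, by
        rw [Finset.card_image_of_injective _ hinj, Finset.card_univ, Fintype.card_fin]⟩ with hS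
    have hmem : ∀ i, f i ∈ S.1 := fun i => Finset.mem_image_of_mem f (Finset.mem_univ i)
    set g : Fin k → Fin k := fun i => (S.1.orderIsoOfFin S.2).symm ⟨f i, hmem i⟩ with hg
    have hginj : Function.Injective g := by
      intro a b hab
      apply hinj
      have := congrArg (fun z => ((S.1.orderIsoOfFin S.2 z : {x // x ∈ S.1}) : Fin N)) hab
      simpa [hg] using this
    have hgbij : Function.Bijective g := Finite.injective_iff_bijective.1 hginj
    set σ : Equiv.Perm (Fin k) := Equiv.ofBijective g hgbij with hσ
    have hf : ∀ i, f i = ((S.1.orderIsoOfFin S.2 (σ i) : {x // x ∈ S.1}) : Fin N) := by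
      intro i
      simp [hσ, hg, Equiv.ofBijective_apply]
    have hcomp : (fun i => Pi.single (f i) (1:ℂ)) =
        (fun j : Fin k => Pi.single ((S.1.orderIsoOfFin S.2 j : Fin N)) (1:ℂ)) ∘ σ :=
      funext fun i => by rw [Function.comp_apply, ← hf i]
    have key : ExteriorAlgebra.ιMulti ℂ k (fun i => Pi.single (f i) (1:ℂ)) =
        Equiv.Perm.sign σ • wedgeOfSubset S := by
      rw [hcomp, wedgeOfSubset]
      exact AlternatingMap.map_perm _ _ _
    rw [key]
    rcases Int.units_eq_one_or (Equiv.Perm.sign σ) with h1 | h1 <;> rw [h1]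
    · rw [one_smul]
      exact Submodule.subset_span ⟨S, rfl⟩
    · rw [Units.neg_smul, one_smul]
      exact Submodule.neg_mem _ (Submodule.subset_span ⟨S, rfl⟩)
  · rw [Function.not_injective_iff] at hinj
    obtain ⟨a, b, hab, hne⟩ := hinj
    rw [AlternatingMap.map_eq_zero_of_eq _ _ (by rw [hab]) hne]
    exact Submodule.zero_mem _

/-- Type A: for `A` in the minimal nilpotent orbit of `sl(n+1,ℂ)` (rank one and traceless),
`A² = 0`, hence `exp A = 1 + A`, and for `1 ≤ k ≤ n` the coefficient of `e_1 ∧ ⋯ ∧ e_k`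
in the wedge-basis expansion of `⋀^k(exp A)(e_1 ∧ ⋯ ∧ e_k)` equals `1 + Tr(A_{k×k})`,
the linear Gelfand–Zeitlin Hamiltonian. -/
theorem stmt3 {n : ℕ} (hn : 1 ≤ n) (A : Matrix (Fin (n + 1)) (Fin (n + 1)) ℂ)
    (hrank : A.rank = 1) (htr : A.trace = 0) :
    A * A = 0 ∧
    NormedSpace.exp A = 1 + A ∧
    ∀ (k : ℕ) (hk1 : 1 ≤ k) (hkn : k ≤ n),
      (∃ c : {S : Finset (Fin (n + 1)) // S.card = k} → ℂ,
          ExteriorAlgebra.map (Matrix.toLin' (NormedSpace.exp A))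
              (ExteriorAlgebra.ιMulti ℂ k fun j : Fin k =>
                Pi.single (Fin.castLE (hkn.trans (Nat.le_succ n)) j) (1 : ℂ)) =
            ∑ S : {S : Finset (Fin (n + 1)) // S.card = k}, c S • wedgeOfSubset S) ∧
      ∀ c : {S : Finset (Fin (n + 1)) // S.card = k} → ℂ,
        ExteriorAlgebra.map (Matrix.toLin' (NormedSpace.exp A))
            (ExteriorAlgebra.ιMulti ℂ k fun j : Fin k =>
              Pi.single (Fin.castLE (hkn.trans (Nat.le_succ n)) j) (1 : ℂ)) =
          ∑ S : {S : Finset (Fin (n + 1)) // S.card = k}, c S • wedgeOfSubset S →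
        c ⟨Finset.map (Fin.castLEOrderEmb (hkn.trans (Nat.le_succ n))).toEmbedding
              Finset.univ, by simp⟩ =
          1 + (A.submatrix (Fin.castLE (hkn.trans (Nat.le_succ n)))
                (Fin.castLE (hkn.trans (Nat.le_succ n)))).trace := by
  obtain ⟨u, w, hA⟩ := rank_one_decomp A hrank
  have h2 : A * A = 0 := sq_zero A u w hA htr
  have hexp : NormedSpace.exp A = 1 + A := exp_eq A h2
  refine ⟨h2, hexp, fun k hk1 hkn => ?_⟩
  set le : k ≤ n + 1 := hkn.trans (Nat.le_succ n) with hle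
  constructor
  · rw [ExteriorAlgebra.map_apply_ιMulti]
    obtain ⟨c, hc⟩ := (Submodule.mem_span_range_iff_exists_fun ℂ).1
      (wedge_span (Matrix.toLin' (NormedSpace.exp A) ∘
        fun j : Fin k => Pi.single (Fin.castLE le j) (1 : ℂ)))
    exact ⟨c, hc.symm⟩
  · intro c hc
    set S₀ : {S : Finset (Fin (n + 1)) // S.card = k} :=
      ⟨Finset.map (Fin.castLEOrderEmb le).toEmbedding Finset.univ, by simp⟩ with hS₀
    have hemb : ⇑(S₀.1.orderEmbOfFin S₀.2) = Fin.castLE le := by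
      refine (Finset.orderEmbOfFin_unique S₀.2 (fun x => ?_)
        (Fin.strictMono_castLE le)).symm
      simp [hS₀]
      exact ⟨x, rfl⟩
    have h1 := congrArg (coeffFn S₀) hc
    rw [map_sum] at h1
    simp only [map_smul, coeffFn_wedge, smul_eq_mul, mul_ite, mul_one, mul_zero,
      Finset.sum_ite_eq', Finset.mem_univ, if_true] at h1
    rw [ExteriorAlgebra.map_apply_ιMulti, coeffFn_ιMulti] at h1
    rw [← h1]
    have hentry : (Matrix.of fun i j => ((Matrix.toLin' (NormedSpace.exp A) ∘
        fun j : Fin k => Pi.single (Fin.castLE le j) (1 : ℂ)) i) (S₀.1.orderEmbOfFin S₀.2 j)) =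
        Matrix.transpose ((1 + A).submatrix (Fin.castLE le) (Fin.castLE le)) := by
      ext i j
      simp only [Matrix.of_apply, Function.comp_apply, Matrix.toLin'_apply, hemb, hexp,
        Matrix.mulVec_single_one, Matrix.col_apply, mul_one, Matrix.transpose_apply, Matrix.submatrix_apply]
    have hsub : (1 + A).submatrix (Fin.castLE le) (Fin.castLE le) =
        1 + A.submatrix (Fin.castLE le) (Fin.castLE le) := by
      ext i j
      simp [Matrix.one_apply, (Fin.castLE_injective le).eq_iff]
    rw [hentry, Matrix.det_transpose, hsub]
    have hB : A.submatrix (Fin.castLE le) (Fin.castLE le) =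
        Matrix.replicateCol Unit (fun i => u (Fin.castLE le i)) *
          Matrix.replicateRow Unit (fun j => w (Fin.castLE le j)) := by
      ext i j
      simp [Matrix.mul_apply, hA]
    rw [hB, Matrix.det_one_add_replicateCol_mul_replicateRow, ← hB]
    congr 1
    rw [Matrix.trace]
    simp only [dotProduct, Matrix.diag_apply, Matrix.submatrix_apply]
    exact Finset.sum_congr rfl fun i _ => by rw [hA, mul_comm]
end

section
/- Let N ≥ 1 and for 1 ≤ j ≤ N let P_j denote the N×N diagonal matrix whose first j diagonal entries are 1 and whose remaining entries are 0. For an N×N complex matrix A and 1 ≤ k ≤ N set G_k(A) = Tr(P_k·A)·P_k − P_k·A·P_k. Then for all A and all 1 ≤ k, l ≤ N, Tr( A · (G_k(A)·P_l − P_l·G_k(A)) ) = 0. (G_k(A) is the gradient, with respect to the trace pairing, of the order-2 Gelfand–Zeitlin Hamiltonian g_k(A) = ½((Tr A_{k×k})² − Tr((A_{k×k})²)), and P_l is the gradient of the order-1 Hamiltonian f_l(A) = Tr(A_{l×l}); the displayed expression is the Kirillov–Kostant Poisson bracket {g_k, f_l}(A), so the order-2 and order-1 Gelfand–Zeitlin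 Hamiltonians Poisson-commute.) -/
/-- Poisson-commutativity of the order-2 and order-1 Gelfand–Zeitlin Hamiltonians:
with `P_j` the diagonal projection onto the first `j` coordinates and
`G_k(A) = Tr(P_k A)·P_k − P_k A P_k` the gradient of the order-2 Hamiltonian,
the Kirillov–Kostant bracket `Tr(A·[G_k(A), P_l])` vanishes for all `A` and `1 ≤ k, l ≤ N`. -/
theorem stmt7 {N : ℕ} (hN : 1 ≤ N) (A : Matrix (Fin N) (Fin N) ℂ)
    (k l : ℕ) (hk1 : 1 ≤ k) (hkN : k ≤ N) (hl1 : 1 ≤ l) (hlN : l ≤ N) :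
    let P : ℕ → Matrix (Fin N) (Fin N) ℂ :=
      fun j => Matrix.diagonal fun i => if (i : ℕ) < j then 1 else 0
    let G : Matrix (Fin N) (Fin N) ℂ := (P k * A).trace • P k - P k * A * P k
    (A * (G * P l - P l * G)).trace = 0 := by
  intro P G
  have hcomm : P k * P l = P l * P k := by
    ext i j
    simp [P, Matrix.diagonal_mul_diagonal, Matrix.diagonal_apply]
    split_ifs <;> simp_all <;> omega
  have e1 := Matrix.trace_mul_comm (A * P k * A * P l) (P k)
  have e2 := Matrix.trace_mul_comm (A * P l) (P k * A * P k)
  simp only [mul_assoc] at e1 e2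
  simp only [G, Matrix.mul_sub, Matrix.sub_mul, Matrix.trace_sub,
    Matrix.mul_smul, Matrix.smul_mul, Matrix.trace_smul, mul_assoc, hcomm]
  rw [e1, ← e2]
  ring
end

section
/- Let A be an N×N complex matrix with A·A = 0 and rank A ≤ 2. Then for every 1 ≤ k ≤ N, the coefficient of the basis vector e_1 ∧ ⋯ ∧ e_k in the expansion of (⋀^k(exp A))(e_1 ∧ ⋯ ∧ e_k) in the standard wedge basis of ⋀^k(ℂ^N) equals 1 + Tr(A_{k×k}) + ½((Tr(A_{k×k}))² − Tr((A_{k×k})²)). (For A in the minimal nilpotent orbit of so(2n+1,ℂ) or so(2n,ℂ), which consists of square-zero matrices of rank 2, these are the Hamiltonians Tr(A_{k×k}) and Tr(⋀²A_{k×k}) of the integrable system in types B and D for the non-spinor fundamental representations.) -/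
open ExteriorAlgebra

/- ### Auxiliary lemmas -/

theorem aux_exp_sq_zero {N : ℕ} (A : Matrix (Fin N) (Fin N) ℂ) (hA : A * A = 0) :
    NormedSpace.exp A = 1 + A := by
  rw [NormedSpace.exp_eq_tsum (𝕂 := ℂ)]
  show ∑' n : ℕ, ((n.factorial : ℂ))⁻¹ • A ^ n = 1 + A
  rw [tsum_eq_sum (s := {0, 1}) ?_]
  · simp [pow_succ]
  · intro n hn
    simp only [Finset.mem_insert, Finset.mem_singleton] at hn
    have h2 : 2 ≤ n := by omega
    obtain ⟨m, rfl⟩ := Nat.exists_eq_add_of_le h2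
    rw [pow_add, pow_two, hA]
    simp

theorem aux_rank_factor {k : ℕ} (B : Matrix (Fin k) (Fin k) ℂ) (h : B.rank ≤ 2) :
    ∃ (C : Matrix (Fin k) (Fin 2) ℂ) (D : Matrix (Fin 2) (Fin k) ℂ), B = C * D := by
  set V := LinearMap.range B.mulVecLin with hV
  have hfr : Module.finrank ℂ V ≤ 2 := h
  obtain ⟨v, hv⟩ : ∃ v : Fin 2 → (Fin k → ℂ),
      (V : Submodule ℂ (Fin k → ℂ)) ≤ Submodule.span ℂ (Set.range v) := by
    have b := Module.finBasis ℂ V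
    refine ⟨fun i => if h : (i : ℕ) < Module.finrank ℂ V then (b ⟨i, h⟩ : Fin k → ℂ) else 0, ?_⟩
    intro x hx
    have hxr := b.sum_repr ⟨x, hx⟩
    have : x = ∑ i, b.repr ⟨x, hx⟩ i • (b i : Fin k → ℂ) := by
      have := congrArg Subtype.val hxr
      simp only [Submodule.coe_sum, Submodule.coe_smul] at this
      exact this.symm
    rw [this]
    refine Submodule.sum_mem _ fun i _ => Submodule.smul_mem _ _ (Submodule.subset_span ?_)
    refine ⟨Fin.castLE hfr i, ?_⟩
    simp [Fin.castLE, i.isLt]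
  have hcol : ∀ j, ∃ d : Fin 2 → ℂ, ∑ i, d i • v i = B.mulVec (Pi.single j 1) := by
    intro j
    have : B.mulVec (Pi.single j 1) ∈ Submodule.span ℂ (Set.range v) :=
      hv (LinearMap.mem_range_self _ _)
    exact (Submodule.mem_span_range_iff_exists_fun ℂ).mp this
  choose d hd using hcol
  refine ⟨Matrix.of fun i l => v l i, Matrix.of fun l j => d j l, ?_⟩
  ext i j
  have := congrFun (hd j) i
  simp only [Matrix.mulVec_single, Finset.sum_apply, Pi.smul_apply, smul_eq_mul, mul_one, Matrix.col_apply, op_smul_eq_mul] at this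
  rw [Matrix.mul_apply]
  simp only [Matrix.of_apply]
  rw [← this]
  exact Finset.sum_congr rfl fun l _ => mul_comm _ _

theorem aux_det_one_add_rank_two {k : ℕ} (B : Matrix (Fin k) (Fin k) ℂ) (h : B.rank ≤ 2) :
    (1 + B).det = 1 + B.trace + (1/2 : ℂ) * (B.trace ^ 2 - (B * B).trace) := by
  obtain ⟨C, D, rfl⟩ := aux_rank_factor B h
  rw [Matrix.det_one_add_mul_comm]
  have htr : (D * C).trace = (C * D).trace := Matrix.trace_mul_comm D C
  have htr2 : ((D * C) * (D * C)).trace = ((C * D) * (C * D)).trace := by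
    rw [Matrix.mul_assoc, Matrix.trace_mul_comm, ← Matrix.mul_assoc, ← Matrix.mul_assoc]
  rw [← htr, ← htr2]
  set E := D * C
  rw [Matrix.det_fin_two, Matrix.trace_fin_two]
  have hE2 : (E * E).trace = E 0 0 * E 0 0 + E 0 1 * E 1 0 + (E 1 0 * E 0 1 + E 1 1 * E 1 1) := by
    rw [Matrix.trace_fin_two]
    simp [Matrix.mul_apply, Fin.sum_univ_two]
  rw [hE2]
  simp only [Matrix.add_apply, Matrix.one_apply_eq, Matrix.one_apply_ne (by decide : (0:Fin 2) ≠ 1),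
    Matrix.one_apply_ne (by decide : (1:Fin 2) ≠ 0)]
  ring

theorem aux_rank_submatrix_le {N k : ℕ} (A : Matrix (Fin N) (Fin N) ℂ) (f : Fin k → Fin N) :
    (A.submatrix f f).rank ≤ A.rank := by
  have hP : (1 : Matrix (Fin N) (Fin N) ℂ).submatrix f id *
      (A * (1 : Matrix (Fin N) (Fin N) ℂ).submatrix id f) = A.submatrix f f := by
    ext i j
    rw [Matrix.mul_apply]
    simp only [Matrix.submatrix_apply, id_eq, Matrix.one_apply, Matrix.mul_apply]
    rw [Finset.sum_eq_single (f i)]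
    · simp only [if_pos rfl, one_mul]
      rw [Finset.sum_eq_single (f j)]
      · simp
      · intro b _ hb
        rw [if_neg hb, mul_zero]
      · simp
    · intro b _ hb
      rw [if_neg (Ne.symm hb), zero_mul]
    · simp
  calc (A.submatrix f f).rank = _ := by rw [← hP]
    _ ≤ (A * (1 : Matrix (Fin N) (Fin N) ℂ).submatrix id f).rank := Matrix.rank_mul_le_right _ _
    _ ≤ A.rank := Matrix.rank_mul_le_left _ _

theorem aux_submatrix_one_inj {N k : ℕ} {f : Fin k → Fin N} (hf : Function.Injective f) :
    (1 : Matrix (Fin N) (Fin N) ℂ).submatrix f f = 1 := by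
  ext i j
  simp only [Matrix.submatrix_apply, Matrix.one_apply, hf.eq_iff]

/-- The alternating "coefficient of `e_S`" form in degree `k`. -/
noncomputable def auxAltS {N k : ℕ} (S : {S : Finset (Fin N) // S.card = k}) :
    (Fin N → ℂ) [⋀^Fin k]→ₗ[ℂ] ℂ :=
  Matrix.detRowAlternating.compLinearMap
    (LinearMap.funLeft ℂ ℂ (fun j : Fin k => (S.1.orderIsoOfFin S.2 j : Fin N)))

/-- The linear functional on the exterior algebra extracting the coefficient of `e_S`. -/
noncomputable def auxPhi {N k : ℕ} (S : {S : Finset (Fin N) // S.card = k}) :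
    ExteriorAlgebra ℂ (Fin N → ℂ) →ₗ[ℂ] ℂ :=
  ExteriorAlgebra.liftAlternating
    (fun n => if h : n = k then h.symm ▸ auxAltS S else 0)

theorem auxPhi_ιMulti {N k : ℕ} (S : {S : Finset (Fin N) // S.card = k})
    (v : Fin k → (Fin N → ℂ)) :
    auxPhi S (ExteriorAlgebra.ιMulti ℂ k v) =
      Matrix.det (Matrix.of fun i j => v i (S.1.orderIsoOfFin S.2 j)) := by
  rw [auxPhi, ExteriorAlgebra.liftAlternating_apply_ιMulti]
  simp [auxAltS, Matrix.detRowAlternating, LinearMap.funLeft]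
  rfl

theorem auxPhi_wedge {N k : ℕ} (S T : {S : Finset (Fin N) // S.card = k}) :
    auxPhi S (wedgeOfSubset T) = if S = T then 1 else 0 := by
  rw [wedgeOfSubset, auxPhi_ιMulti]
  by_cases h : S = T
  · subst h
    rw [if_pos rfl]
    have : (Matrix.of fun i j => Pi.single (M := fun _ : Fin N => ℂ)
        ((S.1.orderIsoOfFin S.2 i : Fin N)) (1:ℂ) (S.1.orderIsoOfFin S.2 j)) = 1 := by
      ext i j
      by_cases hij : i = j
      · subst hij; simp
      · rw [Matrix.one_apply_ne hij]
        simp only [Matrix.of_apply, Pi.single_apply]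
        rw [if_neg]
        intro hc
        exact hij (by
          have := (S.1.orderIsoOfFin S.2).injective (Subtype.ext hc.symm)
          exact this)
    rw [this, Matrix.det_one]
  · rw [if_neg h]
    obtain ⟨x, hxT, hxS⟩ : ∃ x, x ∈ T.1 ∧ x ∉ S.1 := by
      by_contra hc
      push_neg at hc
      have hsub : T.1 ⊆ S.1 := hc
      have : T.1 = S.1 := Finset.eq_of_subset_of_card_le hsub (by rw [S.2, T.2])
      exact h (Subtype.ext this.symm)
    obtain ⟨i, hi⟩ : ∃ i, (T.1.orderIsoOfFin T.2 i : Fin N) = x := by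
      obtain ⟨i, hi⟩ := (T.1.orderIsoOfFin T.2).surjective ⟨x, hxT⟩
      exact ⟨i, by rw [hi]⟩
    apply Matrix.det_eq_zero_of_row_eq_zero i
    intro j
    simp only [Matrix.of_apply, Pi.single_apply]
    rw [if_neg]
    intro hc
    rw [hi] at hc
    exact hxS (hc ▸ (S.1.orderIsoOfFin S.2 j).2)

theorem aux_ιMulti_mem_span {N k : ℕ} (w : Fin k → (Fin N → ℂ)) :
    ExteriorAlgebra.ιMulti ℂ k w ∈
      Submodule.span ℂ (Set.range (wedgeOfSubset (N := N) (k := k))) := by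
  have hw : ∀ j, w j = ∑ i : Fin N, w j i • Pi.single (M := fun _ : Fin N => ℂ) i (1:ℂ) := by
    intro j
    ext i
    simp [Pi.single_apply, Finset.sum_ite_eq' Finset.univ i]
  have expand : ExteriorAlgebra.ιMulti ℂ k w =
      ∑ r : Fin k → Fin N, (∏ j, w j (r j)) •
        ExteriorAlgebra.ιMulti ℂ k (fun j => Pi.single (M := fun _ : Fin N => ℂ) (r j) (1:ℂ)) := by
    calc ExteriorAlgebra.ιMulti ℂ k w
        = ExteriorAlgebra.ιMulti ℂ k
            (fun j => ∑ i : Fin N, w j i • Pi.single (M := fun _ : Fin N => ℂ) i (1:ℂ)) :=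
          congrArg _ (funext hw)
      _ = (ExteriorAlgebra.ιMulti ℂ k).toMultilinearMap
            (fun j => ∑ i : Fin N, w j i • Pi.single (M := fun _ : Fin N => ℂ) i (1:ℂ)) := rfl
      _ = _ := by
          rw [MultilinearMap.map_sum]
          refine Finset.sum_congr rfl fun r _ => ?_
          rw [MultilinearMap.map_smul_univ]
          rfl
  rw [expand]
  refine Submodule.sum_mem _ fun r _ => Submodule.smul_mem _ _ ?_
  by_cases hinj : Function.Injective r
  · have hcard : (Finset.image r Finset.univ).card = k := by
      rw [Finset.card_image_of_injective _ hinj, Finset.card_univ, Fintype.card_fin]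
    set S : {S : Finset (Fin N) // S.card = k} := ⟨Finset.image r Finset.univ, hcard⟩
    have hmem : ∀ j, r j ∈ S.1 := fun j => Finset.mem_image_of_mem r (Finset.mem_univ j)
    set g : Fin k → Fin k := fun j => (S.1.orderIsoOfFin S.2).symm ⟨r j, hmem j⟩
    have hginj : Function.Injective g := by
      intro a b hab
      apply hinj
      have := (S.1.orderIsoOfFin S.2).symm.injective.eq_iff.mp hab
      exact congrArg Subtype.val this
    have hgbij : Function.Bijective g := (Finite.injective_iff_bijective).mp hginj
    set π : Equiv.Perm (Fin k) := Equiv.ofBijective g hgbij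
    have hval : ∀ j, (S.1.orderIsoOfFin S.2 (π j) : Fin N) = r j := by
      intro j
      show (S.1.orderIsoOfFin S.2 ((S.1.orderIsoOfFin S.2).symm ⟨r j, hmem j⟩) : Fin N) = r j
      rw [OrderIso.apply_symm_apply]
    have hcomp : (fun j => Pi.single (M := fun _ : Fin N => ℂ) (r j) 1) =
        (fun j => Pi.single ((S.1.orderIsoOfFin S.2 j : Fin N)) (1:ℂ)) ∘ π := by
      funext j
      simp only [Function.comp_apply]
      rw [hval j]
    rw [hcomp]
    rw [AlternatingMap.map_perm]
    exact Submodule.smul_mem _ _ (Submodule.subset_span ⟨S, rfl⟩)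
  · rw [Function.not_injective_iff] at hinj
    obtain ⟨a, b, hab, hne⟩ := hinj
    have : ExteriorAlgebra.ιMulti ℂ k
        (fun j => Pi.single (M := fun _ : Fin N => ℂ) (r j) 1) = 0 :=
      AlternatingMap.map_eq_zero_of_eq _ _ (by rw [hab]) hne
    rw [this]
    exact Submodule.zero_mem _

/-- Types B and D: for a square-zero `N×N` complex matrix `A` of rank at most `2`
(e.g. an element of the minimal nilpotent orbit of `so(2n,ℂ)` or `so(2n+1,ℂ)`), and
`1 ≤ k ≤ N`, the coefficient of `e_1 ∧ ⋯ ∧ e_k` in the wedge-basis expansion of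
`⋀^k(exp A)(e_1 ∧ ⋯ ∧ e_k)` equals
`1 + Tr(A_{k×k}) + ½((Tr A_{k×k})² − Tr((A_{k×k})²))`. -/
theorem stmt10 {N : ℕ} (A : Matrix (Fin N) (Fin N) ℂ) (hA : A * A = 0) (hrank : A.rank ≤ 2)
    (k : ℕ) (hk1 : 1 ≤ k) (hkN : k ≤ N) :
    (∃ c : {S : Finset (Fin N) // S.card = k} → ℂ,
        ExteriorAlgebra.map (Matrix.toLin' (NormedSpace.exp A))
            (ExteriorAlgebra.ιMulti ℂ k fun j : Fin k =>
              Pi.single (Fin.castLE hkN j) (1 : ℂ)) =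
          ∑ S : {S : Finset (Fin N) // S.card = k}, c S • wedgeOfSubset S) ∧
    ∀ c : {S : Finset (Fin N) // S.card = k} → ℂ,
      ExteriorAlgebra.map (Matrix.toLin' (NormedSpace.exp A))
          (ExteriorAlgebra.ιMulti ℂ k fun j : Fin k =>
            Pi.single (Fin.castLE hkN j) (1 : ℂ)) =
        ∑ S : {S : Finset (Fin N) // S.card = k}, c S • wedgeOfSubset S →
      c ⟨Finset.map (Fin.castLEOrderEmb hkN).toEmbedding Finset.univ, by simp⟩ =
        1 + (A.submatrix (Fin.castLE hkN) (Fin.castLE hkN)).trace +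
          (1 / 2 : ℂ) * ((A.submatrix (Fin.castLE hkN) (Fin.castLE hkN)).trace ^ 2 -
            (A.submatrix (Fin.castLE hkN) (Fin.castLE hkN) *
              A.submatrix (Fin.castLE hkN) (Fin.castLE hkN)).trace) := by
  have hexp : NormedSpace.exp A = 1 + A := aux_exp_sq_zero A hA
  set f := Matrix.toLin' (NormedSpace.exp A) with hf
  set v₀ : Fin k → (Fin N → ℂ) := fun j => Pi.single (Fin.castLE hkN j) (1:ℂ) with hv₀
  have hmap : ExteriorAlgebra.map f (ExteriorAlgebra.ιMulti ℂ k v₀) =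
      ExteriorAlgebra.ιMulti ℂ k (⇑f ∘ v₀) := ExteriorAlgebra.map_apply_ιMulti f v₀
  constructor
  · have hmem := aux_ιMulti_mem_span (N := N) (k := k) (⇑f ∘ v₀)
    rw [← hmap] at hmem
    obtain ⟨c, hc⟩ := (Submodule.mem_span_range_iff_exists_fun ℂ).mp hmem
    exact ⟨c, hc.symm⟩
  · intro c hc
    set S₀ : {S : Finset (Fin N) // S.card = k} :=
      ⟨Finset.map (Fin.castLEOrderEmb hkN).toEmbedding Finset.univ, by simp⟩ with hS₀
    have hiso : ∀ j, (S₀.1.orderIsoOfFin S₀.2 j : Fin N) = Fin.castLE hkN j := by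
      intro j
      rw [Finset.coe_orderIsoOfFin_apply]
      have hu := Finset.orderEmbOfFin_unique (f := fun j : Fin k => Fin.castLE hkN j) S₀.2
        (fun x => by simp [hS₀]; exact ⟨x, rfl⟩) (Fin.castLEOrderEmb hkN).strictMono
      exact (congrFun hu j).symm
    have h1 : auxPhi S₀ (∑ S : {S : Finset (Fin N) // S.card = k}, c S • wedgeOfSubset S)
        = c S₀ := by
      rw [map_sum]
      simp only [map_smul, auxPhi_wedge, smul_eq_mul, mul_ite, mul_one, mul_zero]
      have := Finset.sum_ite_eq Finset.univ S₀ c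
      simp only [Finset.mem_univ, if_true] at this
      rw [← this]
    have h2 : auxPhi S₀ (ExteriorAlgebra.map f (ExteriorAlgebra.ιMulti ℂ k v₀)) =
        Matrix.det (1 + A.submatrix (Fin.castLE hkN) (Fin.castLE hkN)) := by
      rw [hmap, auxPhi_ιMulti]
      have hentry : (Matrix.of fun i j => (⇑f ∘ v₀) i (S₀.1.orderIsoOfFin S₀.2 j)) =
          Matrix.transpose ((1 + A).submatrix (Fin.castLE hkN) (Fin.castLE hkN)) := by
        ext i j
        simp only [Matrix.of_apply, Function.comp_apply, hf, hexp, hv₀, Matrix.transpose_apply,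
          Matrix.submatrix_apply, Matrix.toLin'_apply, hiso j]
        rw [Matrix.mulVec_single]
        simp
      have hsub : (1 + A).submatrix (Fin.castLE hkN) (Fin.castLE hkN) =
          1 + A.submatrix (Fin.castLE hkN) (Fin.castLE hkN) := by
        ext i j
        simp [Matrix.submatrix_apply, Matrix.add_apply, Matrix.one_apply,
          (Fin.castLE_injective hkN).eq_iff]
      rw [hentry, Matrix.det_transpose, hsub]
    rw [← h1, ← hc, h2, aux_det_one_add_rank_two _
      (le_trans (aux_rank_submatrix_le A (Fin.castLE hkN)) hrank)]
end
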